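/- Let H be a real Hilbert space, let μ, L ∈ ℝ with μ < L and L > 0, and let {(y_i, F_i, u_i)}_{i ∈ J} be a finite family of triplets in H × ℝ × H. Then the following are equivalent: (i) there exists a Fréchet differentiable function f : H → ℝ such that x ↦ f(x) − (μ/2)‖x‖² is convex and x ↦ (L/2)‖x‖² − f(x) is convex, and f(y_i) = F_i and ∇f(y_i) = u_i for every i ∈ J; (ii) for all i, j ∈ J, F_i ≥ F_j + ⟨u_j, y_i − y_j⟩ + (μ/2)‖y_i − y_j‖² + (1/(2(L−μ)))‖u_i − u_j − μ(y_i − y_j)‖². -/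

import Mathlib

open scoped RealInnerProductSpace

open Filter Asymptotics


section One


variable {H : Type*} [NormedAddCommGroup H] [InnerProductSpace ℝ H] [CompleteSpace H]

lemma sq_isLittleO : (fun h : H => ‖h‖ ^ 2) =o[nhds (0:H)] (fun h => h) := by
  rw [isLittleO_iff]
  intro c hc
  filter_upwards [tendsto_norm_zero.eventually (gt_mem_nhds hc)] with h hh
  rw [Real.norm_eq_abs, abs_of_nonneg (by positivity : (0:ℝ) ≤ ‖h‖^2), pow_two]
  exact mul_le_mul_of_nonneg_right hh.le (norm_nonneg h)

lemma hasGradientAt_of_sandwich {f : H → ℝ} {v x : H} {C : ℝ}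
    (h1 : ∀ h, -(C * ‖h‖ ^ 2) ≤ f (x + h) - f x - ⟪v, h⟫)
    (h2 : ∀ h, f (x + h) - f x - ⟪v, h⟫ ≤ C * ‖h‖ ^ 2) :
    HasGradientAt f v x := by
  rw [hasGradientAt_iff_isLittleO_nhds_zero]
  have hO : (fun h => f (x + h) - f x - ⟪v, h⟫) =O[nhds (0:H)] (fun h : H => ‖h‖ ^ 2) := by
    rw [isBigO_iff]
    refine ⟨C, Filter.Eventually.of_forall fun h => ?_⟩
    rw [Real.norm_eq_abs]
    have : |f (x + h) - f x - ⟪v, h⟫| ≤ C * ‖h‖ ^ 2 := abs_le.2 ⟨h1 h, h2 h⟩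
    calc |f (x + h) - f x - ⟪v, h⟫| ≤ C * ‖h‖ ^ 2 := this
    _ ≤ C * ‖(‖h‖ ^ 2)‖ := by rw [Real.norm_eq_abs, abs_of_nonneg (by positivity)]
  exact hO.trans_isLittleO sq_isLittleO

lemma hasGradientAt_scaled_normsq (c : ℝ) (x : H) :
    HasGradientAt (fun x : H => c * ‖x‖ ^ 2) ((2 * c) • x) x := by
  apply hasGradientAt_of_sandwich (C := |c|)
  · intro h
    rw [norm_add_sq_real, real_inner_smul_left]
    nlinarith [neg_abs_le c, le_abs_self c, sq_nonneg ‖h‖]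
  · intro h
    rw [norm_add_sq_real, real_inner_smul_left]
    nlinarith [neg_abs_le c, le_abs_self c, sq_nonneg ‖h‖]



/-- subgradient inequality everywhere implies convexity -/
lemma convexOn_of_subgradient {f : H → ℝ} {g : H → H}
    (h : ∀ x z, f x + ⟪g x, z - x⟫ ≤ f z) : ConvexOn ℝ Set.univ f := by
  refine ⟨convex_univ, fun x _ z _ a b ha hb hab => ?_⟩
  set w := a • x + b • z with hw
  have h1 := h w x
  have h2 := h w z
  have key : a * (f w + ⟪g w, x - w⟫) + b * (f w + ⟪g w, z - w⟫) ≤ a * f x + b * f z := by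
    have := mul_le_mul_of_nonneg_left h1 ha
    have := mul_le_mul_of_nonneg_left h2 hb
    linarith
  have hinner : a * ⟪g w, x - w⟫ + b * ⟪g w, z - w⟫ = 0 := by
    rw [← real_inner_smul_right, ← real_inner_smul_right, ← inner_add_right]
    have : a • (x - w) + b • (z - w) = 0 := by
      have h0 : a • (x - w) + b • (z - w) = (a • x + b • z) - (a + b) • w := by module
      rw [h0, hab, ← hw, one_smul, sub_self]
    rw [this, inner_zero_right]
  have hfw : a * f w + b * f w = f w := by rw [← add_mul, hab, one_mul]
  simp only [smul_eq_mul]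
  linarith [key, hinner, hfw]

/-- convexity implies the gradient inequality -/
lemma subgradient_of_convexOn {f : H → ℝ} (hf : ConvexOn ℝ Set.univ f)
    {G x : H} (hg : HasGradientAt f G x) (z : H) : f x + ⟪G, z - x⟫ ≤ f z := by
  have hline : ∀ t : ℝ, (AffineMap.lineMap x z : ℝ →ᵃ[ℝ] H) t = x + t • (z - x) := by
    intro t; rw [AffineMap.lineMap_apply_module']; abel
  have hconv : ConvexOn ℝ Set.univ (f ∘ (AffineMap.lineMap x z : ℝ →ᵃ[ℝ] H)) := by
    have := ConvexOn.comp_affineMap (AffineMap.lineMap x z : ℝ →ᵃ[ℝ] H) hf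
    simpa using this
  have hderiv : HasDerivAt (f ∘ (AffineMap.lineMap x z : ℝ →ᵃ[ℝ] H)) ⟪G, z - x⟫ 0 := by
    have hl : HasDerivAt (fun t : ℝ => x + t • (z - x)) (z - x) 0 := by
      simpa using ((hasDerivAt_id (0:ℝ)).smul_const (z - x)).const_add x
    have hfd := hg.hasFDerivAt
    have hfd' : HasFDerivAt f ((InnerProductSpace.toDual ℝ H) G) (x + (0:ℝ) • (z - x)) := by
      simpa using hfd
    have := hfd'.comp_hasDerivAt (0:ℝ) hl
    have heq : (InnerProductSpace.toDual ℝ H G) (z - x) = ⟪G, z - x⟫ := rfl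
    simp only [Function.comp_def, hline]
    simpa [heq, Function.comp_def] using this
  have hslope := hconv.le_slope_of_hasDerivAt (Set.mem_univ (0:ℝ)) (Set.mem_univ (1:ℝ))
    one_pos hderiv
  rw [slope_def_field] at hslope
  simp only [Function.comp_apply, hline] at hslope
  simp only [one_smul, zero_smul, add_zero] at hslope
  have : x + (z - x) = z := by abel
  rw [this] at hslope
  -- hslope : ⟪G, z-x⟫ ≤ (f z - f x) / (1 - 0)
  have : ⟪G, z - x⟫ ≤ f z - f x := by
    simpa using hslope
  linarith

end One

section Two
variable {H : Type*} [NormedAddCommGroup H] [InnerProductSpace ℝ H]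



section Construction

variable {J : Type*} [Fintype J]

/-- barycenter of gradient vectors -/
private noncomputable def SCIub (u : J → H) (α : J → ℝ) : H := ∑ j, α j • u j

private lemma SCIub_line (u : J → H) (α β : J → ℝ) (t : ℝ) :
    SCIub u (α + t • (β - α)) = SCIub u α + t • (SCIub u β - SCIub u α) := by
  unfold SCIub
  have step : ∀ j : J, (α + t • (β - α)) j • u j =
      α j • u j + (t • (β j • u j) - t • (α j • u j)) := by
    intro j
    simp only [Pi.add_apply, Pi.smul_apply, Pi.sub_apply, smul_eq_mul]
    module
  rw [Finset.sum_congr rfl fun j _ => step j, Finset.sum_add_distrib,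
    Finset.sum_sub_distrib, ← Finset.smul_sum, ← Finset.smul_sum, ← smul_sub]

private lemma SCIcsum_line (c : J → ℝ) (α β : J → ℝ) (t : ℝ) :
    ∑ j, (α + t • (β - α)) j * c j =
      (∑ j, α j * c j) + t * ((∑ j, β j * c j) - (∑ j, α j * c j)) := by
  have step : ∀ j : J, (α + t • (β - α)) j * c j =
      α j * c j + (t * (β j * c j) - t * (α j * c j)) := by
    intro j
    simp only [Pi.add_apply, Pi.smul_apply, Pi.sub_apply, smul_eq_mul]
    ring
  rw [Finset.sum_congr rfl fun j _ => step j, Finset.sum_add_distrib,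
    Finset.sum_sub_distrib, ← Finset.mul_sum, ← Finset.mul_sum, ← mul_sub]

private lemma SCIub_inner_left (u : J → H) (α : J → ℝ) (x : H) :
    ⟪SCIub u α, x⟫ = ∑ j, α j * ⟪u j, x⟫ := by
  unfold SCIub
  rw [sum_inner]
  exact Finset.sum_congr rfl fun j _ => real_inner_smul_left _ _ _

private lemma SCIub_inner_right (u : J → H) (α : J → ℝ) (x : H) :
    ⟪x, SCIub u α⟫ = ∑ j, α j * ⟪x, u j⟫ := by
  unfold SCIub
  rw [inner_sum]
  exact Finset.sum_congr rfl fun j _ => real_inner_smul_right _ _ _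

private lemma SCI_field_id (L s s' ivx ivz iv'z nv nv' nzx : ℝ) (hL : L ≠ 0) :
    s + ivx - nv / (2 * L) + (ivz - ivx) + L / 2 * nzx - (s' + iv'z - nv' / (2 * L)) =
    (2 * L * s + 2 * L * ivz - nv + L ^ 2 * nzx - 2 * L * s' - 2 * L * iv'z + nv') / (2 * L) := by
  field_simp
  ring

private lemma SCI_exists_interp (L : ℝ) (hL : 0 < L) [Nonempty J]
    (y : J → H) (F : J → ℝ) (u : J → H)
    (hyp : ∀ i j, F j + ⟪u j, y i - y j⟫ + 1 / (2 * L) * ‖u i - u j‖ ^ 2 ≤ F i) :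
    ∃ f : H → ℝ, ∃ g : H → H,
      (∀ x z, f x + ⟪g x, z - x⟫ ≤ f z) ∧
      (∀ x z, f z ≤ f x + ⟪g x, z - x⟫ + L / 2 * ‖z - x‖ ^ 2) ∧
      (∀ i, f (y i) = F i) ∧ (∀ i, g (y i) = u i) := by
  classical
  set c : J → ℝ := fun j => F j - ⟪u j, y j⟫ + ‖u j‖ ^ 2 / (2 * L) with hc
  set q : H → (J → ℝ) → ℝ := fun x α =>
    (∑ j, α j * c j) + ⟪SCIub u α, x⟫ - ‖SCIub u α‖ ^ 2 / (2 * L) with hq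
  clear_value c q
  -- continuity of q x
  have hub_cont : Continuous (SCIub u) := by
    unfold SCIub
    exact continuous_finset_sum _ fun j _ => (continuous_apply j).smul continuous_const
  have hq_cont : ∀ x, Continuous (q x) := by
    intro x
    rw [hq]
    apply Continuous.sub
    · exact (continuous_finset_sum _ fun j _ =>
        (continuous_apply j).mul continuous_const).add
        ((hub_cont.inner continuous_const))
    · exact ((hub_cont.norm.pow 2)).div_const _
  -- maximizer
  have hex : ∀ x : H, ∃ α, α ∈ stdSimplex ℝ J ∧ ∀ β ∈ stdSimplex ℝ J, q x β ≤ q x α := by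
    intro x
    obtain ⟨α, hα, hmax⟩ := (isCompact_stdSimplex ℝ J).exists_isMaxOn
      ⟨Pi.single (Classical.arbitrary J) 1, single_mem_stdSimplex ℝ _⟩
      (hq_cont x).continuousOn
    exact ⟨α, hα, fun β hβ => hmax hβ⟩
  choose A hAmem hAmax using hex
  have h2L : (0:ℝ) < 2 * L := by linarith
  -- first-order optimality at the maximizer (multiplied by L)
  have hK3 : ∀ x, ∀ β ∈ stdSimplex ℝ J,
      L * ((∑ j, β j * c j) - (∑ j, (A x) j * c j)) + L * ⟪SCIub u β - SCIub u (A x), x⟫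
        - ⟪SCIub u (A x), SCIub u β - SCIub u (A x)⟫ ≤ 0 := by
    intro x β hβ
    set w := SCIub u β - SCIub u (A x) with hw
    set E := ‖w‖ ^ 2 / (2 * L) with hE
    set D := L * ((∑ j, β j * c j) - (∑ j, (A x) j * c j)) + L * ⟪w, x⟫
      - ⟪SCIub u (A x), w⟫ with hD
    have hline_val : ∀ t : ℝ, q x (A x + t • (β - A x)) = q x (A x) + t * (D / L) - t ^ 2 * E := by
      intro t
      simp only [hq]
      rw [SCIcsum_line, SCIub_line, ← hw, inner_add_left, real_inner_smul_left,
        norm_add_sq_real, real_inner_smul_right, norm_smul]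
      simp only [Real.norm_eq_abs, mul_pow, sq_abs]
      rw [hE, hD]
      field_simp
      ring
    have hDle : ∀ t ∈ Set.Ioc (0:ℝ) 1, D / L ≤ t * E := by
      intro t ht
      have hpt : A x + t • (β - A x) = (1 - t) • A x + t • β := by module
      have hmem : A x + t • (β - A x) ∈ stdSimplex ℝ J := by
        rw [hpt]
        exact (convex_stdSimplex ℝ J) (hAmem x) hβ (by linarith [ht.2]) ht.1.le (by ring)
      have hle := hAmax x _ hmem
      rw [hline_val t] at hle
      nlinarith [ht.1]
    have hDL : D / L ≤ 0 := by
      have htend : Tendsto (fun t : ℝ => t * E) (nhdsWithin 0 (Set.Ioi 0)) (nhds 0) := by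
        have h1 : Tendsto (fun t : ℝ => t * E) (nhds 0) (nhds (0 * E)) :=
          (continuous_id.mul continuous_const).tendsto 0
        rw [zero_mul] at h1
        exact h1.mono_left nhdsWithin_le_nhds
      refine ge_of_tendsto htend ?_
      filter_upwards [Ioc_mem_nhdsGT_of_mem (⟨le_refl 0, one_pos⟩ : (0:ℝ) ∈ Set.Ico 0 1)]
        with t ht
      exact hDle t ht
    have := div_nonpos_iff.mp hDL
    rcases this with ⟨h1, h2⟩ | ⟨h1, h2⟩
    · linarith
    · exact h1
  -- value at the vertex
  have hδ : ∀ i, q (y i) (Pi.single i 1) = F i := by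
    intro i
    have h1 : SCIub u (Pi.single i 1) = u i := by
      unfold SCIub
      simp [Pi.single_apply, ite_smul]
    have h2 : ∑ j, (Pi.single i 1 : J → ℝ) j * c j = c i := by
      simp [Pi.single_apply, ite_mul]
    simp only [hq]
    rw [h1, h2]
    simp only [hc]
    ring
  -- upper bound for q at interpolation points
  have hbound : ∀ i, ∀ α ∈ stdSimplex ℝ J,
      q (y i) α ≤ F i - ‖u i - SCIub u α‖ ^ 2 / (2 * L) := by
    intro i α hα
    obtain ⟨hα0, hα1⟩ := hα
    have hterm : ∀ j, c j + ⟪u j, y i⟫ ≤ F i + (2 * ⟪u i, u j⟫ - ‖u i‖ ^ 2) / (2 * L) := by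
      intro j
      have hj := hyp i j
      have hexp : ‖u i - u j‖ ^ 2 = ‖u i‖ ^ 2 - 2 * ⟪u i, u j⟫ + ‖u j‖ ^ 2 :=
        norm_sub_sq_real _ _
      have hiy : ⟪u j, y i - y j⟫ = ⟪u j, y i⟫ - ⟪u j, y j⟫ := inner_sub_right _ _ _
      rw [hexp, hiy] at hj
      simp only [hc]
      have hinv : 1 / (2 * L) * (‖u i‖ ^ 2 - 2 * ⟪u i, u j⟫ + ‖u j‖ ^ 2) =
          ‖u i‖ ^ 2 / (2 * L) - 2 * ⟪u i, u j⟫ / (2 * L) + ‖u j‖ ^ 2 / (2 * L) := by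
        field_simp
      rw [hinv] at hj
      have hsplit : (2 * ⟪u i, u j⟫ - ‖u i‖ ^ 2) / (2 * L) =
          2 * ⟪u i, u j⟫ / (2 * L) - ‖u i‖ ^ 2 / (2 * L) := by
        field_simp
      rw [hsplit]
      linarith [hj]
    have hsum : q (y i) α = ∑ j, α j * (c j + ⟪u j, y i⟫) - ‖SCIub u α‖ ^ 2 / (2 * L) := by
      simp only [hq]
      rw [SCIub_inner_left]
      have : ∀ j : J, α j * (c j + ⟪u j, y i⟫) = α j * c j + α j * ⟪u j, y i⟫ :=
        fun j => by ring
      rw [Finset.sum_congr rfl fun j _ => this j, Finset.sum_add_distrib]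
    have hsumle : ∑ j, α j * (c j + ⟪u j, y i⟫) ≤
        F i + (2 * ⟪u i, SCIub u α⟫ - ‖u i‖ ^ 2) / (2 * L) := by
      have step1 : ∑ j, α j * (c j + ⟪u j, y i⟫) ≤
          ∑ j, α j * (F i + (2 * ⟪u i, u j⟫ - ‖u i‖ ^ 2) / (2 * L)) :=
        Finset.sum_le_sum fun j _ => mul_le_mul_of_nonneg_left (hterm j) (hα0 j)
      have step2 : ∑ j, α j * (F i + (2 * ⟪u i, u j⟫ - ‖u i‖ ^ 2) / (2 * L)) =
          F i + (2 * ⟪u i, SCIub u α⟫ - ‖u i‖ ^ 2) / (2 * L) := by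
        have expand : ∀ j : J, α j * (F i + (2 * ⟪u i, u j⟫ - ‖u i‖ ^ 2) / (2 * L)) =
            α j * F i + (α j * ⟪u i, u j⟫) / L - α j * (‖u i‖ ^ 2 / (2 * L)) := by
          intro j
          field_simp
          ring
        rw [Finset.sum_congr rfl fun j _ => expand j, Finset.sum_sub_distrib,
          Finset.sum_add_distrib, ← Finset.sum_mul, ← Finset.sum_div, ← Finset.sum_mul, hα1,
          SCIub_inner_right]
        field_simp
        ring
      linarith
    have hfinal : F i + (2 * ⟪u i, SCIub u α⟫ - ‖u i‖ ^ 2) / (2 * L)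
        - ‖SCIub u α‖ ^ 2 / (2 * L) = F i - ‖u i - SCIub u α‖ ^ 2 / (2 * L) := by
      rw [norm_sub_sq_real]
      field_simp
      ring
    linarith [hsum, hsumle, hfinal]
  refine ⟨fun x => q x (A x), fun x => SCIub u (A x), ?_, ?_, ?_, ?_⟩
  · -- subgradient inequality (convexity)
    intro x z
    have h1 : q z (A x) ≤ q z (A z) := hAmax z (A x) (hAmem x)
    have h2 : q x (A x) + ⟪SCIub u (A x), z - x⟫ = q z (A x) := by
      simp only [hq]
      rw [inner_sub_right]
      ring
    linarith
  · -- smoothness inequality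
    intro x z
    have hk := hK3 x (A z) (hAmem z)
    have hk_exp : L * ((∑ j, (A z) j * c j) - (∑ j, (A x) j * c j))
        + L * (⟪SCIub u (A z), x⟫ - ⟪SCIub u (A x), x⟫)
        - (⟪SCIub u (A x), SCIub u (A z)⟫ - ‖SCIub u (A x)‖ ^ 2) ≤ 0 := by
      rw [inner_sub_left, inner_sub_right, real_inner_self_eq_norm_sq] at hk
      linarith [hk]
    have hsq : (0:ℝ) ≤ ‖SCIub u (A z) - SCIub u (A x) - L • (z - x)‖ ^ 2 := sq_nonneg _
    have hsq_exp : ‖SCIub u (A z) - SCIub u (A x) - L • (z - x)‖ ^ 2 =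
        ‖SCIub u (A z)‖ ^ 2 - 2 * ⟪SCIub u (A x), SCIub u (A z)⟫ + ‖SCIub u (A x)‖ ^ 2
          - 2 * L * (⟪SCIub u (A z), z⟫ - ⟪SCIub u (A z), x⟫ - ⟪SCIub u (A x), z⟫
            + ⟪SCIub u (A x), x⟫) + L ^ 2 * ‖z - x‖ ^ 2 := by
      rw [norm_sub_sq_real, norm_sub_sq_real, real_inner_smul_right, norm_smul]
      simp only [Real.norm_eq_abs, mul_pow, sq_abs]
      rw [inner_sub_left, inner_sub_right, inner_sub_right,
        real_inner_comm (SCIub u (A z)) (SCIub u (A x))]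
      ring
    rw [hsq_exp] at hsq
    have key : 0 ≤ 2 * L * (∑ j, (A x) j * c j) + 2 * L * ⟪SCIub u (A x), z⟫
        - ‖SCIub u (A x)‖ ^ 2 + L ^ 2 * ‖z - x‖ ^ 2 - 2 * L * (∑ j, (A z) j * c j)
        - 2 * L * ⟪SCIub u (A z), z⟫ + ‖SCIub u (A z)‖ ^ 2 := by
      linarith [hk_exp, hsq]
    have hgoal_eq := SCI_field_id L (∑ j, (A x) j * c j) (∑ j, (A z) j * c j)
      ⟪SCIub u (A x), x⟫ ⟪SCIub u (A x), z⟫ ⟪SCIub u (A z), z⟫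
      (‖SCIub u (A x)‖ ^ 2) (‖SCIub u (A z)‖ ^ 2) (‖z - x‖ ^ 2) (ne_of_gt hL)
    have hdiv := div_nonneg key h2L.le
    simp only [hq]
    rw [inner_sub_right, ← sub_nonneg]
    linarith [hgoal_eq, hdiv]
  · -- interpolation of values
    intro i
    have hge : F i ≤ q (y i) (A (y i)) := by
      rw [← hδ i]
      exact hAmax (y i) _ (single_mem_stdSimplex ℝ i)
    have hle := hbound i (A (y i)) (hAmem (y i))
    have h0 : 0 ≤ ‖u i - SCIub u (A (y i))‖ ^ 2 / (2 * L) := by positivity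
    show q (y i) (A (y i)) = F i
    linarith
  · -- interpolation of gradients
    intro i
    have hge : F i ≤ q (y i) (A (y i)) := by
      rw [← hδ i]
      exact hAmax (y i) _ (single_mem_stdSimplex ℝ i)
    have hle := hbound i (A (y i)) (hAmem (y i))
    have h0 : ‖u i - SCIub u (A (y i))‖ ^ 2 / (2 * L) ≤ 0 := by linarith
    have h1 : ‖u i - SCIub u (A (y i))‖ ^ 2 ≤ 0 := by
      by_contra hcon
      push_neg at hcon
      have := div_pos hcon h2L
      linarith
    have h2 : ‖u i - SCIub u (A (y i))‖ = 0 := by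
      have := sq_nonneg ‖u i - SCIub u (A (y i))‖
      nlinarith
    have h3 : u i - SCIub u (A (y i)) = 0 := norm_eq_zero.mp h2
    show SCIub u (A (y i)) = u i
    rw [sub_eq_zero] at h3
    exact h3.symm

end Construction

end Two



section GradHelpers

variable {H : Type*} [NormedAddCommGroup H] [InnerProductSpace ℝ H] [CompleteSpace H]

private lemma hasGradientAt_add' {f1 f2 : H → ℝ} {v1 v2 x : H}
    (h1 : HasGradientAt f1 v1 x) (h2 : HasGradientAt f2 v2 x) :
    HasGradientAt (fun w => f1 w + f2 w) (v1 + v2) x := by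
  rw [hasGradientAt_iff_hasFDerivAt] at *
  have := h1.add h2
  rw [← map_add] at this
  exact this

private lemma hasGradientAt_sub' {f1 f2 : H → ℝ} {v1 v2 x : H}
    (h1 : HasGradientAt f1 v1 x) (h2 : HasGradientAt f2 v2 x) :
    HasGradientAt (fun w => f1 w - f2 w) (v1 - v2) x := by
  rw [hasGradientAt_iff_hasFDerivAt] at *
  have := h1.sub h2
  rw [← map_sub] at this
  exact this

end GradHelpers

private theorem SCI_forward_aux {H : Type*} [NormedAddCommGroup H] [InnerProductSpace ℝ H] [CompleteSpace H]
    (μ L : ℝ) (hμL : μ < L) (hL : 0 < L) {J : Type*} [Finite J]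
    (y : J → H) (F : J → ℝ) (u : J → H)
    (hex : ∃ f : H → ℝ, ∃ g : H → H,
        (∀ x, HasGradientAt f (g x) x) ∧
        ConvexOn ℝ Set.univ (fun x => f x - μ / 2 * ‖x‖ ^ 2) ∧
        ConvexOn ℝ Set.univ (fun x => L / 2 * ‖x‖ ^ 2 - f x) ∧
        (∀ i, f (y i) = F i) ∧ (∀ i, g (y i) = u i))
    (i j : J) :
    F i ≥ F j + ⟪u j, y i - y j⟫ + μ / 2 * ‖y i - y j‖ ^ 2 +
        1 / (2 * (L - μ)) * ‖u i - u j - μ • (y i - y j)‖ ^ 2 := by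
  obtain ⟨f, g, hgrad, hconv1, hconv2, hfy, hgy⟩ := hex
  have hL' : (0:ℝ) < L - μ := by linarith
  -- gradients of the shifted functions
  have hg1 : ∀ x : H, HasGradientAt (fun w => f w - μ / 2 * ‖w‖ ^ 2) (g x - μ • x) x := by
    intro x
    have h2 := hasGradientAt_scaled_normsq (μ/2) x
    rw [show (2 * (μ/2) : ℝ) = μ from by ring] at h2
    exact hasGradientAt_sub' (hgrad x) h2
  have hg2 : ∀ x : H, HasGradientAt (fun w => L / 2 * ‖w‖ ^ 2 - f w) (L • x - g x) x := by
    intro x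
    have h2 := hasGradientAt_scaled_normsq (L/2) x
    rw [show (2 * (L/2) : ℝ) = L from by ring] at h2
    exact hasGradientAt_sub' h2 (hgrad x)
  have ha : ∀ x z : H, (f x - μ / 2 * ‖x‖ ^ 2) + ⟪g x - μ • x, z - x⟫ ≤ f z - μ / 2 * ‖z‖ ^ 2 :=
    fun x z => subgradient_of_convexOn hconv1 (hg1 x) z
  have hb : ∀ x z : H, (L / 2 * ‖x‖ ^ 2 - f x) + ⟪L • x - g x, z - x⟫ ≤ L / 2 * ‖z‖ ^ 2 - f z :=
    fun x z => subgradient_of_convexOn hconv2 (hg2 x) z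
  set d : H := (u i - μ • y i) - (u j - μ • y j) with hd
  clear_value d
  set w : H := y i - (L - μ)⁻¹ • d with hw
  clear_value w
  have hA := ha (y j) w
  rw [hfy j, hgy j] at hA
  have hB := hb (y i) w
  rw [hfy i, hgy i] at hB
  -- convert hB to the shifted form
  have hB' : f w - μ / 2 * ‖w‖ ^ 2 ≤ (F i - μ / 2 * ‖y i‖ ^ 2) + ⟪u i - μ • y i, w - y i⟫
      + (L - μ) / 2 * ‖w - y i‖ ^ 2 := by
    have e1 : ⟪L • y i - u i, w - y i⟫ =
        L * ⟪y i, w⟫ - L * ‖y i‖ ^ 2 - ⟪u i, w⟫ + ⟪u i, y i⟫ := by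
      rw [inner_sub_left, real_inner_smul_left, inner_sub_right, inner_sub_right,
        real_inner_self_eq_norm_sq]
      ring
    have e2 : ⟪u i - μ • y i, w - y i⟫ =
        ⟪u i, w⟫ - ⟪u i, y i⟫ - μ * ⟪y i, w⟫ + μ * ‖y i‖ ^ 2 := by
      rw [inner_sub_left, real_inner_smul_left, inner_sub_right, inner_sub_right,
        real_inner_self_eq_norm_sq]
      ring
    have e3 : ‖w - y i‖ ^ 2 = ‖w‖ ^ 2 - 2 * ⟪y i, w⟫ + ‖y i‖ ^ 2 := by
      rw [norm_sub_sq_real, real_inner_comm]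
    rw [e1] at hB
    rw [e2, e3]
    nlinarith [hB]
  have hA' : (F j - μ / 2 * ‖y j‖ ^ 2) + ⟪u j - μ • y j, w - y j⟫ ≤ f w - μ / 2 * ‖w‖ ^ 2 := hA
  -- plug in the explicit w
  have hwyi : w - y i = -((L - μ)⁻¹ • d) := by rw [hw]; abel
  have hwyj : w - y j = (y i - y j) - (L - μ)⁻¹ • d := by rw [hw]; abel
  have hIj : ⟪u j - μ • y j, w - y j⟫ =
      ⟪u j - μ • y j, y i - y j⟫ - (L - μ)⁻¹ * ⟪u j - μ • y j, d⟫ := by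
    rw [hwyj, inner_sub_right, real_inner_smul_right]
  have hIi : ⟪u i - μ • y i, w - y i⟫ = -((L - μ)⁻¹ * ⟪u i - μ • y i, d⟫) := by
    rw [hwyi, inner_neg_right, real_inner_smul_right]
  have hnormw : ‖w - y i‖ ^ 2 = ((L - μ)⁻¹) ^ 2 * ‖d‖ ^ 2 := by
    rw [hwyi, norm_neg, norm_smul, mul_pow, Real.norm_eq_abs, sq_abs]
  have hIdiff : ⟪u i - μ • y i, d⟫ - ⟪u j - μ • y j, d⟫ = ‖d‖ ^ 2 := by
    rw [← inner_sub_left, ← hd, real_inner_self_eq_norm_sq]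
  -- field identities
  have hne : (L - μ) ≠ 0 := ne_of_gt hL'
  have hf1 : (L - μ) / 2 * (((L - μ)⁻¹) ^ 2 * ‖d‖ ^ 2) = ‖d‖ ^ 2 / (2 * (L - μ)) := by
    field_simp
  have hf2 : (L - μ)⁻¹ * ‖d‖ ^ 2 - ‖d‖ ^ 2 / (2 * (L - μ)) = 1 / (2 * (L - μ)) * ‖d‖ ^ 2 := by
    field_simp
    ring
  have hmul : (L - μ)⁻¹ * ⟪u i - μ • y i, d⟫ - (L - μ)⁻¹ * ⟪u j - μ • y j, d⟫ =
      (L - μ)⁻¹ * ‖d‖ ^ 2 := by rw [← mul_sub, hIdiff]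
  -- chain
  have hchain : (F j - μ / 2 * ‖y j‖ ^ 2) + ⟪u j - μ • y j, y i - y j⟫
      + 1 / (2 * (L - μ)) * ‖d‖ ^ 2 ≤ F i - μ / 2 * ‖y i‖ ^ 2 := by
    rw [hIj] at hA'
    rw [hIi, hnormw] at hB'
    linarith [hA', hB', hf1, hf2, hmul]
  -- translate back to the original data
  have hd2 : u i - u j - μ • (y i - y j) = d := by rw [hd]; module
  rw [hd2]
  have e5 : ⟪u j - μ • y j, y i - y j⟫ = ⟪u j, y i - y j⟫ - μ * ⟪y j, y i - y j⟫ := by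
    rw [inner_sub_left, real_inner_smul_left]
  have e6 : ⟪y j, y i - y j⟫ = ⟪y j, y i⟫ - ‖y j‖ ^ 2 := by
    rw [inner_sub_right, real_inner_self_eq_norm_sq]
  have e7 : ‖y i - y j‖ ^ 2 = ‖y i‖ ^ 2 - 2 * ⟪y j, y i⟫ + ‖y j‖ ^ 2 := by
    rw [norm_sub_sq_real, real_inner_comm]
  rw [e5, e6] at hchain
  rw [e7]
  linarith [hchain]

/-- Tight interpolation theorem for the class `F_{μ,L}(H)` of Fréchet differentiable
functions that are `μ`-strongly (or weakly, for `μ < 0`) convex and `L`-smooth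
in the sense that `(L/2)‖·‖² - f` is convex, with `-∞ < μ < L < ∞`. -/
theorem smooth_strongly_convex_interpolation
    {H : Type*} [NormedAddCommGroup H] [InnerProductSpace ℝ H] [CompleteSpace H]
    (μ L : ℝ) (hμL : μ < L) (hL : 0 < L)
    {J : Type*} [Finite J] (y : J → H) (F : J → ℝ) (u : J → H) :
    (∃ f : H → ℝ, ∃ g : H → H,
        (∀ x, HasGradientAt f (g x) x) ∧
        ConvexOn ℝ Set.univ (fun x => f x - μ / 2 * ‖x‖ ^ 2) ∧
        ConvexOn ℝ Set.univ (fun x => L / 2 * ‖x‖ ^ 2 - f x) ∧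
        (∀ i, f (y i) = F i) ∧ (∀ i, g (y i) = u i)) ↔
    (∀ i j, F i ≥ F j + ⟪u j, y i - y j⟫ + μ / 2 * ‖y i - y j‖ ^ 2 +
        1 / (2 * (L - μ)) * ‖u i - u j - μ • (y i - y j)‖ ^ 2) := by
  have hL' : (0:ℝ) < L - μ := by linarith
  constructor
  · intro hex i j
    exact SCI_forward_aux μ L hμL hL y F u hex i j
  · intro hyp
    rcases isEmpty_or_nonempty J with hJ | hJ
    · refine ⟨fun x => μ / 2 * ‖x‖ ^ 2, fun x => μ • x, ?_, ?_, ?_,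
        fun i => hJ.elim i, fun i => hJ.elim i⟩
      · intro x
        have h := hasGradientAt_scaled_normsq (μ/2) x
        rw [show (2 * (μ/2) : ℝ) = μ from by ring] at h
        exact h
      · apply convexOn_of_subgradient (g := fun _ => (0:H))
        intro x z
        simp
      · apply convexOn_of_subgradient (g := fun x => (L - μ) • x)
        intro x z
        have h1 : ⟪(L - μ) • x, z - x⟫ = (L - μ) * (⟪x, z⟫ - ‖x‖ ^ 2) := by
          rw [real_inner_smul_left, inner_sub_right, real_inner_self_eq_norm_sq]
        have h2 : ‖z - x‖ ^ 2 = ‖z‖ ^ 2 - 2 * ⟪x, z⟫ + ‖x‖ ^ 2 := by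
          rw [norm_sub_sq_real, real_inner_comm]
        have key : 0 ≤ (L - μ) * (‖z‖ ^ 2 - 2 * ⟪x, z⟫ + ‖x‖ ^ 2) := by
          rw [← h2]
          positivity
        rw [h1]
        nlinarith [key]
    · letI := Fintype.ofFinite J
      have hyp' : ∀ i' j' : J, (F j' - μ / 2 * ‖y j'‖ ^ 2) +
          ⟪u j' - μ • y j', y i' - y j'⟫ +
          1 / (2 * (L - μ)) * ‖(u i' - μ • y i') - (u j' - μ • y j')‖ ^ 2 ≤
          F i' - μ / 2 * ‖y i'‖ ^ 2 := by
        intro i' j'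
        have hd : (u i' - μ • y i') - (u j' - μ • y j') =
            u i' - u j' - μ • (y i' - y j') := by module
        rw [hd]
        have e5 : ⟪u j' - μ • y j', y i' - y j'⟫ =
            ⟪u j', y i' - y j'⟫ - μ * ⟪y j', y i' - y j'⟫ := by
          rw [inner_sub_left, real_inner_smul_left]
        have e6 : ⟪y j', y i' - y j'⟫ = ⟪y j', y i'⟫ - ‖y j'‖ ^ 2 := by
          rw [inner_sub_right, real_inner_self_eq_norm_sq]
        have e7 : ‖y i' - y j'‖ ^ 2 = ‖y i'‖ ^ 2 - 2 * ⟪y j', y i'⟫ + ‖y j'‖ ^ 2 := by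
          rw [norm_sub_sq_real, real_inner_comm]
        have h := hyp i' j'
        rw [e7] at h
        rw [e5, e6]
        linarith [h]
      obtain ⟨f0, g0, hA, hB, hval, hgrad0⟩ := SCI_exists_interp (L - μ) hL' y
        (fun k => F k - μ / 2 * ‖y k‖ ^ 2) (fun k => u k - μ • y k) hyp'
      refine ⟨fun x => μ / 2 * ‖x‖ ^ 2 + f0 x, fun x => μ • x + g0 x, ?_, ?_, ?_, ?_, ?_⟩
      · intro x
        have h1 : HasGradientAt (fun w : H => μ / 2 * ‖w‖ ^ 2) (μ • x) x := by
          have h := hasGradientAt_scaled_normsq (μ/2) x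
          rw [show (2 * (μ/2) : ℝ) = μ from by ring] at h
          exact h
        have h2 : HasGradientAt f0 (g0 x) x := by
          apply hasGradientAt_of_sandwich (C := (L - μ)/2)
          · intro h
            have hxh := hA x (x + h)
            rw [show x + h - x = h from by abel] at hxh
            have hpos : (0:ℝ) ≤ (L - μ)/2 * ‖h‖ ^ 2 := by positivity
            linarith [hxh]
          · intro h
            have hxh := hB x (x + h)
            rw [show x + h - x = h from by abel] at hxh
            linarith [hxh]
        exact hasGradientAt_add' h1 h2
      · apply convexOn_of_subgradient (g := g0)
        intro x z
        have := hA x z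
        simp only []
        linarith [this]
      · apply convexOn_of_subgradient (g := fun x => (L - μ) • x - g0 x)
        intro x z
        have hB' := hB x z
        have h1 : ⟪(L - μ) • x - g0 x, z - x⟫ =
            (L - μ) * ⟪x, z - x⟫ - ⟪g0 x, z - x⟫ := by
          rw [inner_sub_left, real_inner_smul_left]
        have h2 : ⟪x, z - x⟫ = ⟪x, z⟫ - ‖x‖ ^ 2 := by
          rw [inner_sub_right, real_inner_self_eq_norm_sq]
        have h3 : ‖z - x‖ ^ 2 = ‖z‖ ^ 2 - 2 * ⟪x, z⟫ + ‖x‖ ^ 2 := by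
          rw [norm_sub_sq_real, real_inner_comm]
        rw [h3] at hB'
        simp only []
        rw [h1, h2]
        linarith [hB']
      · intro i
        have := hval i
        show μ / 2 * ‖y i‖ ^ 2 + f0 (y i) = F i
        linarith [this]
      · intro i
        show μ • y i + g0 (y i) = u i
        rw [hgrad0 i]
        module
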